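/- (Example 1.8, independence claim) Let n₁, …, n_d be pairwise distinct squarefree positive integers. Then √n₁, …, √n_d are rationally independent: if k = (k₁, …, k_d) ∈ ℤ^d satisfies k₁√n₁ + ⋯ + k_d√n_d = 0, then k = 0. -/

import Mathlib

open scoped BigOperators

namespace Statement8Aux

/-- Square root of a squarefree number `> 1` is irrational. -/
lemma sf_irrational {m : ℕ} (hm : Squarefree m) (h1 : 1 < m) :
    Irrational (Real.sqrt m) := by
  apply irrational_nrt_of_notint_nrt 2 m
  · rw [sq, Real.mul_self_sqrt (by positivity)]; norm_num
  · rintro ⟨y, hy⟩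
    have hy2 : (y : ℝ) * (y : ℝ) = (m : ℝ) := by
      rw [← hy]; exact Real.mul_self_sqrt (by positivity)
    have hzz : (y * y : ℤ) = (m : ℤ) := by exact_mod_cast hy2
    have habs : y.natAbs * y.natAbs = m := by
      have h3 : ((y.natAbs * y.natAbs : ℕ) : ℤ) = (m : ℤ) := by
        rw [Int.natAbs_mul_self]; exact hzz
      exact_mod_cast h3
    have hu : IsUnit y.natAbs := hm y.natAbs (habs ▸ dvd_refl m)
    have h4 := Nat.isUnit_iff.mp hu
    rw [h4] at habs
    omega
  · norm_num

/-- The subfield of ℝ generated by the square roots of elements of `S`. -/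
noncomputable def Ksf (S : Finset ℕ) : Subfield ℝ :=
  Subfield.closure ((fun q : ℕ => Real.sqrt q) '' ↑S)

lemma sqrt_mem_of_mem {S : Finset ℕ} {q : ℕ} (hq : q ∈ S) :
    Real.sqrt q ∈ Ksf S :=
  Subfield.subset_closure ⟨q, by simpa using hq, rfl⟩

lemma Ksf_mono {S T : Finset ℕ} (h : S ⊆ T) : Ksf S ≤ Ksf T :=
  Subfield.closure_mono (Set.image_mono (by exact_mod_cast h))

/-- √ of a finset product of naturals. -/
lemma sqrt_prod (F : Finset ℕ) :
    Real.sqrt (∏ q ∈ F, (q : ℝ)) = ∏ q ∈ F, Real.sqrt q := by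
  classical
  induction F using Finset.induction with
  | empty => simp
  | insert _ _ hx ih =>
    rw [Finset.prod_insert hx, Finset.prod_insert hx,
      Real.sqrt_mul (by positivity), ih]

lemma sqrt_mem_Ksf {S : Finset ℕ} {m : ℕ} (hm : Squarefree m)
    (hsub : m.primeFactors ⊆ S) : Real.sqrt m ∈ Ksf S := by
  have h0 := Nat.prod_primeFactors_of_squarefree hm
  have h1 : (∏ q ∈ m.primeFactors, (q : ℝ)) = (m : ℝ) := by
    rw [← Nat.cast_prod, h0]
  rw [← h1, sqrt_prod]
  exact Subfield.prod_mem _ fun q hq => sqrt_mem_of_mem (hsub hq)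

/-- If `√p ∉ Ksf S` then `a + b √p = 0` forces `a = b = 0`. -/
lemma split_zero {S : Finset ℕ} {p : ℕ} (hp : Real.sqrt p ∉ Ksf S)
    {a b : ℝ} (ha : a ∈ Ksf S) (hb : b ∈ Ksf S)
    (h : a + b * Real.sqrt p = 0) : a = 0 ∧ b = 0 := by
  by_cases hb0 : b = 0
  · subst hb0; constructor
    · linarith
    · rfl
  · exfalso
    apply hp
    have hval : Real.sqrt p = -a / b := by field_simp; linarith
    rw [hval]
    exact div_mem (neg_mem ha) hb

/-- Structure of `Ksf (insert p S)` when `√p ∉ Ksf S`. -/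
lemma mem_insert_Ksf {S : Finset ℕ} {p : ℕ} (hp : Real.sqrt p ∉ Ksf S)
    {x : ℝ} (hx : x ∈ Ksf (insert p S)) :
    ∃ a ∈ Ksf S, ∃ b ∈ Ksf S, x = a + b * Real.sqrt p := by
  classical
  have hsq : Real.sqrt p * Real.sqrt p = (p : ℝ) :=
    Real.mul_self_sqrt (by positivity)
  induction hx using Subfield.closure_induction with
  | mem x hxmem =>
    obtain ⟨q, hq, rfl⟩ := hxmem
    simp only [Finset.coe_insert, Set.mem_insert_iff] at hq
    rcases hq with rfl | hq
    · exact ⟨0, zero_mem _, 1, one_mem _, by ring⟩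
    · exact ⟨Real.sqrt q, sqrt_mem_of_mem (by exact_mod_cast hq), 0,
        zero_mem _, by ring⟩
  | one => exact ⟨1, one_mem _, 0, zero_mem _, by ring⟩
  | add x y hxc hyc ihx ihy =>
    obtain ⟨a, ha, b, hb, rfl⟩ := ihx
    obtain ⟨c, hc, e, he, rfl⟩ := ihy
    exact ⟨a + c, add_mem ha hc, b + e, add_mem hb he, by ring⟩
  | neg x hxc ihx =>
    obtain ⟨a, ha, b, hb, rfl⟩ := ihx
    exact ⟨-a, neg_mem ha, -b, neg_mem hb, by ring⟩
  | inv x hxc ihx =>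
    obtain ⟨a, ha, b, hb, rfl⟩ := ihx
    have h2 : Real.sqrt p ^ 2 = (p : ℝ) := Real.sq_sqrt (by positivity)
    by_cases hx0 : a + b * Real.sqrt p = 0
    · obtain ⟨ha0, hb0⟩ := split_zero hp ha hb hx0
      refine ⟨0, zero_mem _, 0, zero_mem _, ?_⟩
      rw [ha0, hb0]; simp
    · have key : (a + b * Real.sqrt p) * (a - b * Real.sqrt p)
          = a ^ 2 - (p : ℝ) * b ^ 2 := by
        linear_combination (-(b ^ 2)) * h2
      have hD : a ^ 2 - (p : ℝ) * b ^ 2 ≠ 0 := by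
        intro hD0
        have hz : a - b * Real.sqrt p = 0 := by
          rcases mul_eq_zero.mp (key.trans hD0) with h | h
          · exact absurd h hx0
          · exact h
        have hsz := split_zero hp ha (neg_mem hb) (by linarith)
        apply hx0
        have hb0 : b = 0 := by have := hsz.2; linarith
        rw [hsz.1, hb0]; simp
      set D := a ^ 2 - (p : ℝ) * b ^ 2 with hDdef
      have hDmem : D ∈ Ksf S := sub_mem (pow_mem ha 2)
        (mul_mem (natCast_mem _ p) (pow_mem hb 2))
      have hone : (a + b * Real.sqrt p) * ((a - b * Real.sqrt p) / D) = 1 := by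
        rw [← mul_div_assoc, key, div_self hD]
      refine ⟨a / D, div_mem ha hDmem, -b / D, div_mem (neg_mem hb) hDmem, ?_⟩
      rw [inv_eq_of_mul_eq_one_right hone]
      ring
  | mul x y hxc hyc ihx ihy =>
    obtain ⟨a, ha, b, hb, rfl⟩ := ihx
    obtain ⟨c, hc, e, he, rfl⟩ := ihy
    have h2 : Real.sqrt p ^ 2 = (p : ℝ) := Real.sq_sqrt (by positivity)
    refine ⟨a * c + b * e * p, ?_, a * e + b * c, ?_, ?_⟩
    · exact add_mem (mul_mem ha hc)
        (mul_mem (mul_mem hb he) (natCast_mem _ p))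
    · exact add_mem (mul_mem ha he) (mul_mem hb hc)
    · linear_combination (b * e) * h2

/-- Key non-membership lemma: if `m` is squarefree with a prime factor outside
`S`, then `√m ∉ Ksf S`. -/
lemma sqrt_not_mem : ∀ (S : Finset ℕ), (∀ q ∈ S, q.Prime) →
    ∀ m : ℕ, Squarefree m → (∃ q : ℕ, q.Prime ∧ q ∣ m ∧ q ∉ S) →
    Real.sqrt m ∉ Ksf S := by
  classical
  intro S
  induction S using Finset.induction with
  | empty =>
    intro _ m hm ⟨q, hq, hqm, _⟩ hmem
    have hm1 : 1 < m := by
      have := hm.ne_zero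
      have hql := Nat.le_of_dvd (by omega) hqm
      have := hq.two_le
      omega
    have : Ksf (∅ : Finset ℕ) ≤ (Rat.castHom ℝ).fieldRange := by
      apply Subfield.closure_le.mpr; simp
    obtain ⟨r, hr⟩ := this hmem
    exact sf_irrational hm hm1 ⟨r, hr⟩
  | @insert p S hpS ih =>
    intro hprimes m hm ⟨q, hq, hqm, hqS⟩ hmem
    have hp : p.Prime := hprimes p (Finset.mem_insert_self _ _)
    have hSprimes : ∀ r ∈ S, r.Prime := fun r hr =>
      hprimes r (Finset.mem_insert_of_mem hr)
    have hpnot : Real.sqrt p ∉ Ksf S :=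
      ih hSprimes p hp.prime.squarefree ⟨p, hp, dvd_refl p, hpS⟩
    obtain ⟨a, ha, b, hb, hab⟩ := mem_insert_Ksf hpnot hmem
    have hsq : Real.sqrt p * Real.sqrt p = (p : ℝ) :=
      Real.mul_self_sqrt (by positivity)
    have hmsq : (a ^ 2 + (p : ℝ) * b ^ 2 - m) + (2 * a * b) * Real.sqrt p
        = 0 := by
      have hms : Real.sqrt m * Real.sqrt m = (m : ℝ) :=
        Real.mul_self_sqrt (by positivity)
      rw [hab] at hms
      linear_combination hms - b ^ 2 * hsq
    have h2mem : ((2 : ℝ)) ∈ Ksf S := by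
      have := natCast_mem (Ksf S) 2
      simpa using this
    have hsplit := split_zero hpnot
      (sub_mem (add_mem (pow_mem ha 2)
        (mul_mem (natCast_mem _ p) (pow_mem hb 2))) (natCast_mem _ m))
      (mul_mem (mul_mem h2mem ha) hb)
      hmsq
    have hab0 : a * b = 0 := by have := hsplit.2; linarith
    have hq_ne_p : q ≠ p := fun h => hqS (h ▸ Finset.mem_insert_self _ _)
    have hqnotS : q ∉ S := fun h => hqS (Finset.mem_insert_of_mem h)
    rcases mul_eq_zero.mp hab0 with ha0 | hb0
    · -- a = 0 : √m = b √p
      rw [ha0, zero_add] at hab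
      by_cases hpm : p ∣ m
      · -- m = p * t, √t = b ∈ Ksf S
        obtain ⟨t, ht⟩ := hpm
        have htm : (t : ℕ) ∣ m := ⟨p, by rw [ht]; ring⟩
        have htsf : Squarefree t := hm.squarefree_of_dvd htm
        have hqt : q ∣ t := by
          have hcop : q.Coprime p := (Nat.coprime_primes hq hp).mpr hq_ne_p
          exact hcop.dvd_of_dvd_mul_left (ht ▸ hqm)
        have hsqrt_t : Real.sqrt t ∈ Ksf S := by
          have hmt : Real.sqrt m = Real.sqrt p * Real.sqrt t := by
            rw [ht]; push_cast; exact Real.sqrt_mul (by positivity) _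
          have hp_pos : (0 : ℝ) < Real.sqrt p :=
            Real.sqrt_pos.mpr (by exact_mod_cast hp.pos)
          have heq : Real.sqrt p * Real.sqrt t = Real.sqrt p * b := by
            rw [← hmt, hab]; ring
          have hbt : Real.sqrt t = b := mul_left_cancel₀ hp_pos.ne' heq
          rw [hbt]; exact hb
        exact ih hSprimes t htsf ⟨q, hq, hqt, hqnotS⟩ hsqrt_t
      · -- p ∤ m : √(p*m) = b * p ∈ Ksf S
        have hcop : p.Coprime m := (hp.coprime_iff_not_dvd).mpr hpm
        have hpmsf : Squarefree (p * m) :=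
          (Nat.squarefree_mul hcop).mpr ⟨hp.prime.squarefree, hm⟩
        have hsqrt_pm : Real.sqrt ((p * m : ℕ)) ∈ Ksf S := by
          have hcast : ((p * m : ℕ) : ℝ) = (p : ℝ) * (m : ℝ) := by push_cast; ring
          have h5 : Real.sqrt ((p * m : ℕ)) = b * (p : ℝ) := by
            rw [hcast, Real.sqrt_mul (by positivity), hab]
            linear_combination b * hsq
          rw [h5]
          exact mul_mem hb (natCast_mem _ p)
        exact ih hSprimes (p * m) hpmsf
          ⟨q, hq, Dvd.dvd.mul_left hqm p, hqnotS⟩ hsqrt_pm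
    · -- b = 0 : √m = a ∈ Ksf S
      rw [hb0, zero_mul, add_zero] at hab
      exact ih hSprimes m hm ⟨q, hq, hqm, hqnotS⟩ (hab ▸ ha)

/-- Linear independence over ℤ of square roots of squarefree numbers whose
prime factors lie in `S`. -/
lemma indep : ∀ (S : Finset ℕ), (∀ q ∈ S, q.Prime) →
    ∀ F : Finset ℕ, (∀ m ∈ F, Squarefree m ∧ m.primeFactors ⊆ S) →
    ∀ c : ℕ → ℤ, (∑ m ∈ F, (c m : ℝ) * Real.sqrt m) = 0 →
    ∀ m ∈ F, c m = 0 := by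
  classical
  intro S
  induction S using Finset.induction with
  | empty =>
    intro _ F hF c hsum m hmF
    have hm1 : m = 1 := by
      obtain ⟨hsf, hsub⟩ := hF m hmF
      have : m.primeFactors = ∅ := Finset.subset_empty.mp hsub
      rcases Nat.primeFactors_eq_empty.mp this with h | h
      · exact absurd h hsf.ne_zero
      · exact h
    have hFone : ∀ x ∈ F, x = 1 := by
      intro x hx
      obtain ⟨hsf, hsub⟩ := hF x hx
      have : x.primeFactors = ∅ := Finset.subset_empty.mp hsub
      rcases Nat.primeFactors_eq_empty.mp this with h | h
      · exact absurd h hsf.ne_zero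
      · exact h
    have hFeq : F = {1} := by
      apply Finset.eq_singleton_iff_unique_mem.mpr
      exact ⟨hm1 ▸ hmF, hFone⟩
    rw [hFeq] at hsum
    simp at hsum
    rw [hm1]
    exact_mod_cast hsum
  | @insert p S hpS ih =>
    intro hprimes F hF c hsum m hmF
    have hp : p.Prime := hprimes p (Finset.mem_insert_self _ _)
    have hSprimes : ∀ r ∈ S, r.Prime := fun r hr =>
      hprimes r (Finset.mem_insert_of_mem hr)
    have hpnot : Real.sqrt p ∉ Ksf S :=
      sqrt_not_mem S hSprimes p hp.prime.squarefree ⟨p, hp, dvd_refl p, hpS⟩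
    set F₂ := F.filter (fun x => p ∣ x) with hF₂def
    set F₁ := F.filter (fun x => ¬ p ∣ x) with hF₁def
    -- facts about members
    have hmemF : ∀ x ∈ F, Squarefree x ∧ x.primeFactors ⊆ insert p S :=
      hF
    have hF₁sub : ∀ x ∈ F₁, Squarefree x ∧ x.primeFactors ⊆ S := by
      intro x hx
      rw [hF₁def, Finset.mem_filter] at hx
      obtain ⟨hxF, hnd⟩ := hx
      obtain ⟨hsf, hsub⟩ := hF x hxF
      refine ⟨hsf, fun r hr => ?_⟩
      have := hsub hr
      rcases Finset.mem_insert.mp this with rfl | h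
      · exact absurd (Nat.dvd_of_mem_primeFactors hr) hnd
      · exact h
    have hF₂fact : ∀ x ∈ F₂, Squarefree (x / p) ∧ (x / p).primeFactors ⊆ S
        ∧ p * (x / p) = x := by
      intro x hx
      rw [hF₂def, Finset.mem_filter] at hx
      obtain ⟨hxF, hd⟩ := hx
      obtain ⟨hsf, hsub⟩ := hF x hxF
      have hxp : p * (x / p) = x := Nat.mul_div_cancel' hd
      have hdvd : x / p ∣ x := Nat.div_dvd_of_dvd hd
      have hsf' : Squarefree (x / p) := hsf.squarefree_of_dvd hdvd
      have hpnd : ¬ p ∣ (x / p) := by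
        intro hcon
        obtain ⟨u, hu⟩ := hcon
        have : p * p ∣ x := ⟨u, by rw [← hxp, hu]; ring⟩
        have := hsf p this
        exact hp.one_lt.ne' (Nat.isUnit_iff.mp this)
      refine ⟨hsf', fun r hr => ?_, hxp⟩
      have hrd : r ∣ x / p := Nat.dvd_of_mem_primeFactors hr
      have hrx : r ∈ x.primeFactors := by
        rw [Nat.mem_primeFactors] at hr ⊢
        exact ⟨hr.1, hr.2.1.trans hdvd, hsf.ne_zero⟩
      rcases Finset.mem_insert.mp (hsub hrx) with rfl | h
      · exact absurd hrd hpnd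
      · exact h
    -- split the sum
    have hsplit : (∑ x ∈ F₁, (c x : ℝ) * Real.sqrt x)
        + (∑ x ∈ F₂, (c x : ℝ) * Real.sqrt ((x / p : ℕ))) * Real.sqrt p = 0 := by
      have h2 : ∑ x ∈ F₂, (c x : ℝ) * Real.sqrt x
          = (∑ x ∈ F₂, (c x : ℝ) * Real.sqrt ((x / p : ℕ))) * Real.sqrt p := by
        rw [Finset.sum_mul]
        apply Finset.sum_congr rfl
        intro x hx
        obtain ⟨_, _, hxp⟩ := hF₂fact x hx
        have hd : p ∣ x := ⟨x / p, hxp.symm⟩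
        have hxeq : x = x / p * p := (Nat.div_mul_cancel hd).symm
        have hcast : (x : ℝ) = ((x / p : ℕ) : ℝ) * (p : ℝ) := by
          exact_mod_cast congrArg (Nat.cast (R := ℝ)) hxeq
        rw [mul_assoc]
        congr 1
        rw [hcast, Real.sqrt_mul (by positivity)]
      rw [← h2, add_comm]
      exact (Finset.sum_filter_add_sum_filter_not F (fun x => p ∣ x)
        (fun x => (c x : ℝ) * Real.sqrt x)).trans hsum
    have haK : (∑ x ∈ F₁, (c x : ℝ) * Real.sqrt x) ∈ Ksf S := by
      apply Subfield.sum_mem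
      intro x hx
      obtain ⟨hsf, hsub⟩ := hF₁sub x hx
      exact mul_mem (intCast_mem _ (c x)) (sqrt_mem_Ksf hsf hsub)
    have hbK : (∑ x ∈ F₂, (c x : ℝ) * Real.sqrt ((x / p : ℕ))) ∈ Ksf S := by
      apply Subfield.sum_mem
      intro x hx
      obtain ⟨hsf, hsub, _⟩ := hF₂fact x hx
      exact mul_mem (intCast_mem _ (c x)) (sqrt_mem_Ksf hsf hsub)
    obtain ⟨ha0, hb0⟩ := split_zero hpnot haK hbK hsplit
    -- apply induction hypothesis to F₁
    have hc₁ : ∀ x ∈ F₁, c x = 0 := ih hSprimes F₁ hF₁sub c ha0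
    -- apply induction hypothesis to G = image (·/p) F₂
    set G := F₂.image (· / p) with hGdef
    have hGinj : ∀ x ∈ F₂, ∀ y ∈ F₂, x / p = y / p → x = y := by
      intro x hx y hy hxy
      obtain ⟨_, _, hxp⟩ := hF₂fact x hx
      obtain ⟨_, _, hyp⟩ := hF₂fact y hy
      rw [← hxp, ← hyp, hxy]
    have hGcond : ∀ t ∈ G, Squarefree t ∧ t.primeFactors ⊆ S := by
      intro t ht
      rw [hGdef, Finset.mem_image] at ht
      obtain ⟨x, hx, rfl⟩ := ht
      obtain ⟨h1, h2, _⟩ := hF₂fact x hx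
      exact ⟨h1, h2⟩
    have hGsum : (∑ t ∈ G, ((c (p * t) : ℝ)) * Real.sqrt t) = 0 := by
      rw [hGdef, Finset.sum_image hGinj]
      rw [← hb0]
      apply Finset.sum_congr rfl
      intro x hx
      obtain ⟨_, _, hxp⟩ := hF₂fact x hx
      rw [hxp]
    have hc₂ : ∀ t ∈ G, c (p * t) = 0 :=
      ih hSprimes G hGcond (fun t => c (p * t)) hGsum
    -- conclude
    by_cases hpm : p ∣ m
    · have hmF₂ : m ∈ F₂ := by
        rw [hF₂def, Finset.mem_filter]; exact ⟨hmF, hpm⟩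
      obtain ⟨_, _, hxp⟩ := hF₂fact m hmF₂
      have : m / p ∈ G := by
        rw [hGdef, Finset.mem_image]; exact ⟨m, hmF₂, rfl⟩
      have := hc₂ _ this
      rwa [hxp] at this
    · apply hc₁
      rw [hF₁def, Finset.mem_filter]; exact ⟨hmF, hpm⟩

end Statement8Aux

/-- Example 1.8, independence claim: square roots of pairwise
distinct squarefree positive integers are rationally independent. -/
theorem statement8 {d : ℕ} (n : Fin d → ℕ)
    (hpos : ∀ i, 0 < n i) (hsf : ∀ i, Squarefree (n i))
    (hdist : Function.Injective n) :
    ∀ k : Fin d → ℤ, (∑ i, (k i : ℝ) * Real.sqrt (n i)) = 0 → k = 0 := by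
  classical
  intro k hk
  rcases Nat.eq_zero_or_pos d with rfl | hd
  · funext i; exact i.elim0
  have : Nonempty (Fin d) := ⟨⟨0, hd⟩⟩
  set S : Finset ℕ := Finset.univ.biUnion (fun i => (n i).primeFactors)
    with hSdef
  have hS : ∀ q ∈ S, q.Prime := by
    intro q hq
    rw [hSdef, Finset.mem_biUnion] at hq
    obtain ⟨i, _, hi⟩ := hq
    exact Nat.prime_of_mem_primeFactors hi
  set F : Finset ℕ := Finset.univ.image n with hFdef
  set c : ℕ → ℤ := fun m => k (Function.invFun n m) with hcdef
  have hcn : ∀ i, c (n i) = k i := by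
    intro i
    simp only [hcdef]
    rw [Function.leftInverse_invFun hdist i]
  have hFcond : ∀ m ∈ F, Squarefree m ∧ m.primeFactors ⊆ S := by
    intro m hm
    rw [hFdef, Finset.mem_image] at hm
    obtain ⟨i, _, rfl⟩ := hm
    refine ⟨hsf i, fun r hr => ?_⟩
    rw [hSdef, Finset.mem_biUnion]
    exact ⟨i, Finset.mem_univ i, hr⟩
  have hsum : (∑ m ∈ F, (c m : ℝ) * Real.sqrt m) = 0 := by
    rw [hFdef, Finset.sum_image (fun x _ y _ h => hdist h)]
    rw [← hk]
    apply Finset.sum_congr rfl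
    intro i _
    rw [hcn i]
  have := Statement8Aux.indep S hS F hFcond c hsum
  funext i
  have hmF : n i ∈ F := by
    rw [hFdef, Finset.mem_image]; exact ⟨i, Finset.mem_univ i, rfl⟩
  have := this (n i) hmF
  rw [hcn i] at this
  exact this
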